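/- arXiv:1107.4620 — 6 statements merged into one kernel-verified Lean document; each statement's English description precedes it below -/
import Mathlib

section
/- Let f : X → Y be a non-expansive map between nonempty finite metric spaces, and let X ∪ {a} be a one-point metric extension of X. Define d(y,b) = min over x ∈ X of (d(y,f(x)) + d(x,a)) for y ∈ Y. Then d defines a metric on Y ∪ {b} extending the metric on Y. -/
/-- The candidate distance on `Y ∪ {b}` (encoded as `Option Y`, with `none` playing
the role of the new point `b`), where `dA x` denotes the distance `d(x,a)` in the
one-point metric extension `X ∪ {a}`. -/
noncomputable def extDist {X Y : Type} [MetricSpace X] [Fintype X] [Nonempty X]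
    [MetricSpace Y] (f : X → Y) (dA : X → ℝ) : Option Y → Option Y → ℝ
  | some y, some y' => dist y y'
  | some y, none => Finset.univ.inf' Finset.univ_nonempty fun x => dist y (f x) + dA x
  | none, some y => Finset.univ.inf' Finset.univ_nonempty fun x => dist y (f x) + dA x
  | none, none => 0

/-- the formula `d(y,b) = min_{x ∈ X} (d(y,f(x)) + d(x,a))` defines a
metric on `Y ∪ {b}` extending the metric of `Y`. -/
theorem stmt0 {X Y : Type} [MetricSpace X] [Fintype X] [Nonempty X] [MetricSpace Y]
    (f : X → Y) (hf : ∀ p q : X, dist (f p) (f q) ≤ dist p q)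
    (dA : X → ℝ) (hpos : ∀ x, 0 < dA x)
    (htri1 : ∀ x x' : X, dist x x' ≤ dA x + dA x')
    (htri2 : ∀ x x' : X, dA x ≤ dist x x' + dA x') :
    (∀ y y' : Y, extDist f dA (some y) (some y') = dist y y') ∧
    (∀ p q : Option Y, extDist f dA p q = 0 ↔ p = q) ∧
    (∀ p q : Option Y, extDist f dA p q = extDist f dA q p) ∧
    (∀ p q r : Option Y, extDist f dA p r ≤ extDist f dA p q + extDist f dA q r) := by
  have hinfpos : ∀ y : Y,
      0 < Finset.univ.inf' Finset.univ_nonempty fun x => dist y (f x) + dA x := by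
    intro y
    apply (Finset.lt_inf'_iff _).mpr
    intro x _
    have := hpos x
    have := dist_nonneg (x := y) (y := f x)
    linarith
  refine ⟨fun y y' => rfl, ?_, ?_, ?_⟩
  · rintro (_ | p) (_ | q)
    · simp [extDist]
    · simp only [extDist]
      constructor
      · intro h; exact absurd h (ne_of_gt (hinfpos q))
      · intro h; exact absurd h (by simp)
    · simp only [extDist]
      constructor
      · intro h; exact absurd h (ne_of_gt (hinfpos p))
      · intro h; exact absurd h (by simp)
    · simp only [extDist, dist_eq_zero, Option.some_inj]
  · rintro (_ | p) (_ | q) <;> simp [extDist, dist_comm]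
  · rintro (_ | p) (_ | q) (_ | r)
    · simp [extDist]
    · simp only [extDist]; linarith
    · simp only [extDist]; linarith [hinfpos q]
    · -- none, some q, some r
      simp only [extDist]
      obtain ⟨x, -, hx⟩ := Finset.exists_mem_eq_inf' (Finset.univ_nonempty)
        (fun x => dist q (f x) + dA x)
      rw [hx]
      apply le_trans (Finset.inf'_le _ (Finset.mem_univ x))
      have := dist_triangle r q (f x)
      have := dist_comm r q
      linarith
    · simp only [extDist]; linarith
    · -- some p, none, some r
      simp only [extDist]
      obtain ⟨x, -, hx⟩ := Finset.exists_mem_eq_inf' (Finset.univ_nonempty)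
        (fun z => dist p (f z) + dA z)
      obtain ⟨x', -, hx'⟩ := Finset.exists_mem_eq_inf' (Finset.univ_nonempty)
        (fun z => dist r (f z) + dA z)
      rw [hx, hx']
      have h1 := dist_triangle p (f x) r
      have h2 := dist_triangle (f x) (f x') r
      have h3 := hf x x'
      have h4 := htri1 x x'
      have h5 := dist_comm r (f x')
      linarith
    · -- some p, some q, none
      simp only [extDist]
      obtain ⟨x, -, hx⟩ := Finset.exists_mem_eq_inf' (Finset.univ_nonempty)
        (fun z => dist q (f z) + dA z)
      rw [hx]
      apply le_trans (Finset.inf'_le _ (Finset.mem_univ x))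
      have := dist_triangle p q (f x)
      linarith
    · exact dist_triangle p q r
end

section
/- A metric space X is finitely hyperconvex if and only if it is injective with respect to isometric embeddings of finite metric spaces: for every finite metric space T, subspace S ⊆ T, and non-expansive map f : S → X, there exists a non-expansive map f' : T → X extending f. -/
/-- A metric space is finitely hyperconvex if every finite family of closed balls
`B(x i, r i)` with `d(x i, x j) ≤ r i + r j` for all `i, j` has a common point. -/
def FinitelyHyperconvex (X : Type) [MetricSpace X] : Prop :=
  ∀ (n : ℕ) (x : Fin n → X) (r : Fin n → ℝ),
    (∀ i j, dist (x i) (x j) ≤ r i + r j) → ∃ z : X, ∀ i, dist z (x i) ≤ r i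

/-- distance for the one-point extension of a metric space. -/
def optDist {A : Type} [MetricSpace A] (ρ : A → ℝ) : Option A → Option A → ℝ
  | none, none => 0
  | none, some a => ρ a
  | some a, none => ρ a
  | some a, some b => dist a b

/-- One-point extension of a metric space `A` by a point at distance `ρ a` from `a`. -/
def onePointExt {A : Type} [MetricSpace A] (ρ : A → ℝ)
    (hpos : ∀ a, 0 < ρ a)
    (hlip : ∀ a b, ρ a ≤ dist a b + ρ b)
    (htri : ∀ a b, dist a b ≤ ρ a + ρ b) : MetricSpace (Option A) where
  dist := optDist ρ
  dist_self := by rintro (_|a) <;> simp [optDist]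
  dist_comm := by rintro (_|a) (_|b) <;> simp [optDist, dist_comm]
  dist_triangle := by
    rintro (_|a) (_|b) (_|c) <;> simp only [optDist]
    · norm_num
    · norm_num
    · linarith [hpos b]
    · rw [dist_comm]; linarith [hlip c b]
    · linarith [hpos a]
    · exact htri a c
    · exact hlip a b
    · exact dist_triangle a b c
  eq_of_dist_eq_zero := by
    rintro (_|a) (_|b) h <;> simp only [optDist] at h
    · rfl
    · exact absurd h (ne_of_gt (hpos b))
    · exact absurd h (ne_of_gt (hpos a))
    · rw [dist_eq_zero] at h; rw [h]

/-- key one-point extension step for non-expansive maps into a finitely hyperconvex space. -/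
lemma extend_point {X : Type} [MetricSpace X] (hX : FinitelyHyperconvex X)
    {T : Type} [MetricSpace T] [Fintype T] (S : Set T) (f : S → X)
    (hf : ∀ p q : S, dist (f p) (f q) ≤ dist p q) (t₀ : T) :
    ∃ z : X, ∀ s : S, dist z (f s) ≤ dist t₀ (s : T) := by
  haveI : Fintype S := (Set.toFinite S).fintype
  set n := Fintype.card S with hn
  let e : Fin n ≃ S := (Fintype.equivFin S).symm
  obtain ⟨z, hz⟩ := hX n (fun i => f (e i)) (fun i => dist t₀ ((e i : T)))
    (fun i j => (hf (e i) (e j)).trans (by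
      have := dist_triangle_left ((e i : T)) ((e j : T)) t₀
      simpa [Subtype.dist_eq] using this))
  refine ⟨z, fun s => ?_⟩
  have := hz (e.symm s)
  simpa using this

lemma extend_all {X : Type} [MetricSpace X] (hX : FinitelyHyperconvex X)
    {T : Type} [MetricSpace T] [Fintype T] :
    ∀ (k : ℕ) (S : Set T) (f : S → X), Sᶜ.ncard ≤ k →
      (∀ p q : S, dist (f p) (f q) ≤ dist p q) →
      ∃ g : T → X, (∀ p q : T, dist (g p) (g q) ≤ dist p q) ∧ ∀ s : S, g s = f s := by
  intro k
  induction k with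
  | zero =>
    intro S f hcard hf
    have hS : S = Set.univ := by
      have : Sᶜ = ∅ := by
        rw [← Set.ncard_eq_zero (Set.toFinite _)]
        omega
      simpa [Set.compl_empty_iff] using this
    subst hS
    exact ⟨fun t => f ⟨t, trivial⟩, fun p q => hf _ _, fun s => by simp⟩
  | succ k ih =>
    intro S f hcard hf
    by_cases hc : Sᶜ = ∅
    · have hS : S = Set.univ := by simpa [Set.compl_empty_iff] using hc
      subst hS
      exact ⟨fun t => f ⟨t, trivial⟩, fun p q => hf _ _, fun s => by simp⟩
    · obtain ⟨t₀, ht₀⟩ := Set.nonempty_iff_ne_empty.2 hc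
      obtain ⟨z, hz⟩ := extend_point hX S f hf t₀
      classical
      set S' : Set T := insert t₀ S with hS'
      let f' : S' → X := fun p => if h : (p : T) ∈ S then f ⟨p, h⟩ else z
      have hf'S : ∀ (s : T) (hs : s ∈ S), f' ⟨s, Set.mem_insert_of_mem _ hs⟩ = f ⟨s, hs⟩ := by
        intro s hs; simp [f', hs]
      have ht₀' : t₀ ∉ S := ht₀
      have hf't₀ : f' ⟨t₀, Set.mem_insert _ _⟩ = z := by
        simp [f', ht₀']
      have hf' : ∀ p q : S', dist (f' p) (f' q) ≤ dist p q := by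
        rintro ⟨p, hp⟩ ⟨q, hq⟩
        rcases hp with hp | hp <;> rcases hq with hq | hq
        · subst hp; subst hq; simp
        · subst hp
          rw [hf't₀, hf'S q hq, Subtype.dist_eq]
          exact hz ⟨q, hq⟩
        · subst hq
          rw [hf't₀, hf'S p hp, Subtype.dist_eq, dist_comm, dist_comm (α := T) p _]
          exact hz ⟨p, hp⟩
        · rw [hf'S p hp, hf'S q hq, Subtype.dist_eq]
          have := hf ⟨p, hp⟩ ⟨q, hq⟩
          rwa [Subtype.dist_eq] at this
      have hcard' : S'ᶜ.ncard ≤ k := by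
        have h1 : S'ᶜ = Sᶜ \ {t₀} := by
          rw [hS', Set.compl_eq_univ_diff, Set.compl_eq_univ_diff]
          ext u; simp [and_comm]
        have h2 : (Sᶜ \ {t₀}).ncard = Sᶜ.ncard - 1 := by
          rw [Set.ncard_diff_singleton_of_mem ht₀]
        have h3 : 0 < Sᶜ.ncard := (Set.ncard_pos (Set.toFinite _)).2 ⟨t₀, ht₀⟩
        rw [h1]; omega
      obtain ⟨g, hg, hgf'⟩ := ih S' f' hcard' hf'
      refine ⟨g, hg, fun s => ?_⟩
      have := hgf' ⟨s, Set.mem_insert_of_mem _ s.2⟩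
      rw [this, hf'S s s.2]

/-- a metric space is finitely hyperconvex iff it is injective with
respect to isometric embeddings of finite metric spaces. -/
theorem stmt4 (X : Type) [MetricSpace X] :
    FinitelyHyperconvex X ↔
      ∀ (T : Type) [MetricSpace T] [Fintype T] (S : Set T) (f : S → X),
        (∀ p q : S, dist (f p) (f q) ≤ dist p q) →
        ∃ g : T → X, (∀ p q : T, dist (g p) (g q) ≤ dist p q) ∧ ∀ s : S, g s = f s := by
  constructor
  · intro hX T _ _ S f hf
    exact extend_all hX Sᶜ.ncard S f le_rfl hf
  · intro hInj n x r hr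
    have hrnn : ∀ i, 0 ≤ r i := fun i => by have := hr i i; simp at this; linarith
    by_cases h0 : ∃ j, r j = 0
    · obtain ⟨j, hj⟩ := h0
      exact ⟨x j, fun i => by have := hr j i; rw [hj] at this; simpa [dist_comm] using this⟩
    · push_neg at h0
      have hrpos : ∀ i, 0 < r i := fun i => lt_of_le_of_ne (hrnn i) (Ne.symm (h0 i))
      classical
      set A : Set X := Set.range x with hA
      haveI : Fintype A := (Set.finite_range x).fintype
      -- distance from the new point
      let ρ : A → ℝ := fun a => ⨅ i, (r i + dist (a : X) (x i))
      have hbdd : ∀ a : A, BddBelow (Set.range fun i => r i + dist (a : X) (x i)) :=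
        fun a => (Set.finite_range _).bddBelow
      have hρ_le : ∀ (a : A) (i : Fin n), ρ a ≤ r i + dist (a : X) (x i) :=
        fun a i => ciInf_le (hbdd a) i
      have hne : ∀ _ : A, Nonempty (Fin n) := fun a => by
        obtain ⟨i, _⟩ := a.2; exact ⟨i⟩
      have hρ_min : ∀ a : A, ∃ i, ρ a = r i + dist (a : X) (x i) := by
        intro a
        haveI := hne a
        obtain ⟨i, hi⟩ := Finite.exists_min (fun i => r i + dist (a : X) (x i))
        exact ⟨i, le_antisymm (hρ_le a i) (le_ciInf hi)⟩
      have hρ_pos : ∀ a : A, 0 < ρ a := by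
        intro a
        obtain ⟨i, hi⟩ := hρ_min a
        rw [hi]
        have := dist_nonneg (x := (a : X)) (y := x i)
        linarith [hrpos i]
      have hρ_lip : ∀ a b : A, ρ a ≤ dist a b + ρ b := by
        intro a b
        obtain ⟨j, hj⟩ := hρ_min b
        rw [hj, Subtype.dist_eq]
        calc ρ a ≤ r j + dist (a : X) (x j) := hρ_le a j
          _ ≤ r j + (dist (a : X) (b : X) + dist (b : X) (x j)) := by
              linarith [dist_triangle (a : X) (b : X) (x j)]
          _ = dist (a : X) (b : X) + (r j + dist (b : X) (x j)) := by ring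
      have hρ_tri : ∀ a b : A, dist a b ≤ ρ a + ρ b := by
        intro a b
        obtain ⟨i, hi⟩ := hρ_min a
        obtain ⟨j, hj⟩ := hρ_min b
        rw [hi, hj, Subtype.dist_eq]
        calc dist (a : X) (b : X)
            ≤ dist (a : X) (x i) + dist (x i) (x j) + dist (x j) (b : X) :=
              dist_triangle4 _ _ _ _
          _ ≤ dist (a : X) (x i) + (r i + r j) + dist (b : X) (x j) := by
              rw [dist_comm (x j)]; linarith [hr i j]
          _ = (r i + dist (a : X) (x i)) + (r j + dist (b : X) (x j)) := by ring
      letI : MetricSpace (Option A) := onePointExt ρ hρ_pos hρ_lip hρ_tri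
      let S : Set (Option A) := {o | o.isSome}
      let f : S → X := fun p => ((p.1.get p.2 : A) : X)
      have hfs : ∀ (a : A) (h : (some a : Option A) ∈ S), f ⟨some a, h⟩ = (a : X) := by
        intro a h; rfl
      have hf : ∀ p q : S, dist (f p) (f q) ≤ dist p q := by
        rintro ⟨p, hp⟩ ⟨q, hq⟩
        obtain ⟨a, rfl⟩ := Option.isSome_iff_exists.1 hp
        obtain ⟨b, rfl⟩ := Option.isSome_iff_exists.1 hq
        rw [hfs a, hfs b, Subtype.dist_eq]
        have : dist (some a) (some b) = dist a b := rfl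
        rw [this, Subtype.dist_eq]
      obtain ⟨g, hg, hgf⟩ := hInj (Option A) S f hf
      refine ⟨g none, fun i => ?_⟩
      set a : A := ⟨x i, Set.mem_range_self i⟩ with ha
      have h1 : g (some a) = x i := by
        have : (some a : Option A) ∈ S := rfl
        have := hgf ⟨some a, this⟩
        rw [this, hfs a]
      calc dist (g none) (x i) = dist (g none) (g (some a)) := by rw [h1]
        _ ≤ dist (none : Option A) (some a) := hg none (some a)
        _ = ρ a := rfl
        _ ≤ r i + dist (a : X) (x i) := hρ_le a i
        _ = r i := by simp [ha]
end

section
/- No K_n-free graph with n > 2 is injective with respect to embeddings of finite K_n-free graphs: if X is a graph containing no complete subgraph on n vertices, then there exist finite K_n-free graphs S ⊆ T and a graph homomorphism f : S → X admitting no homomorphic extension g : T → X (assuming X is injective for the empty embedding into K_{n−1}, i.e., X contains a copy of K_{n−1}). -/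
open SimpleGraph

/-- no `K_n`-free graph with `n > 2` containing a copy of `K_{n-1}`
is injective with respect to embeddings of finite `K_n`-free graphs: there exist
finite `K_n`-free graphs `S ↪ T` and a homomorphism `f : S → X` with no
homomorphic extension `g : T → X`. -/
theorem stmt7 {V : Type} (n : ℕ) (hn : 2 < n) (X : SimpleGraph V)
    (hfree : X.CliqueFree n)
    (hK : ∃ s : Finset V, X.IsNClique (n - 1) s) :
    ∃ (α β : Type) (_ : Fintype α) (_ : Fintype β)
      (S : SimpleGraph α) (T : SimpleGraph β),
      S.CliqueFree n ∧ T.CliqueFree n ∧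
      ∃ (e : S ↪g T) (f : S →g X), ∀ g : T →g X, g.comp e.toHom ≠ f := by
  classical
  obtain ⟨s, hsclique, hscard⟩ := hK
  -- enumerate the clique
  let ec : s ≃ Fin (n - 1) := s.equivFinOfCardEq hscard
  let c : Fin (n - 1) → V := fun i => (ec.symm i : V)
  have hc_mem : ∀ i, c i ∈ s := fun i => (ec.symm i).2
  have hc_adj : ∀ i j : Fin (n - 1), i ≠ j → X.Adj (c i) (c j) := by
    intro i j hij
    apply hsclique (hc_mem i) (hc_mem j)
    intro h
    apply hij
    have : ec.symm i = ec.symm j := Subtype.ext h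
    exact ec.symm.injective.eq_iff.mp this
  -- S : empty graph on Fin (n-1), T : star graph
  refine ⟨Fin (n - 1), Option (Fin (n - 1)), inferInstance, inferInstance,
    ⊥, ⟨fun a b => a.isNone ≠ b.isNone, ⟨fun a b h => h.symm⟩, ⟨fun a h => h rfl⟩⟩,
    ?_, ?_, ?_⟩
  · exact cliqueFree_bot (by omega)
  · -- T is K_n free: cliques have size ≤ 2
    intro t ht
    have hinj : Set.InjOn Option.isNone (t : Set (Option (Fin (n - 1)))) := by
      intro a ha b hb hab
      by_contra hne
      exact (ht.1 ha hb hne) hab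
    have hcard : t.card ≤ Fintype.card Bool :=
      Finset.card_le_card_of_injOn Option.isNone (fun a _ => Finset.mem_univ _) hinj
    rw [ht.2] at hcard
    simp at hcard
    omega
  · refine ⟨⟨⟨Option.some, fun a b h => Option.some_injective _ h⟩, ?_⟩,
      ⟨c, fun h => absurd h (by simp)⟩, ?_⟩
    · intro a b
      constructor
      · intro h
        exact absurd rfl h
      · intro h
        exact absurd h (by simp)
    · intro g hg
      -- g none together with the clique s gives a K_n in X
      have hgsome : ∀ i : Fin (n - 1), g (Option.some i) = c i := by
        intro i
        exact DFunLike.congr_fun hg i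
      have hadj : ∀ i : Fin (n - 1), X.Adj (g Option.none) (c i) := by
        intro i
        have : X.Adj (g Option.none) (g (Option.some i)) := g.map_rel (by simp)
        rwa [hgsome] at this
      have hadj' : ∀ v ∈ s, X.Adj (g Option.none) v := by
        intro v hv
        have : v = c (ec ⟨v, hv⟩) := by
          simp only [c]
          rw [Equiv.symm_apply_apply]
        rw [this]
        exact hadj _
      have hnot : g Option.none ∉ s := fun h => (X.irrefl (hadj' _ h))
      apply hfree (insert (g Option.none) s)
      constructor
      · intro a ha b hb hab
        simp only [Finset.coe_insert, Set.mem_insert_iff, Finset.mem_coe] at ha hb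
        rcases ha with rfl | ha
        · rcases hb with rfl | hb
          · exact absurd rfl hab
          · exact hadj' _ hb
        · rcases hb with rfl | hb
          · exact (hadj' _ ha).symm
          · exact hsclique ha hb hab
      · rw [Finset.card_insert_of_notMem hnot, hscard]
        omega
end

section
/- Any graph X that is injective with respect to embeddings of finite K_n-free graphs (n > 2) contains a complete subgraph on n vertices; hence no K_n-free graph is injective for finite K_n-free graphs. -/
open SimpleGraph

/-- The star graph with center `none` and leaves `some i`. -/
def starGraph (k : ℕ) : SimpleGraph (Option (Fin k)) where
  Adj a b := (a = none ∧ b ≠ none) ∨ (b = none ∧ a ≠ none)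
  symm := by tauto
  loopless := ⟨by rintro a (⟨h1, h2⟩ | ⟨h1, h2⟩) <;> exact h2 h1⟩

lemma starGraph_cliqueFree (k n : ℕ) (hn : 2 < n) : (_root_.starGraph k).CliqueFree n := by
  intro s hs
  have hcard := hs.card_eq
  have h2 : 2 ≤ (s.erase none).card := by
    by_cases h : none ∈ s
    · rw [Finset.card_erase_of_mem h, hcard]; omega
    · rw [Finset.erase_eq_of_notMem h, hcard]; omega
  obtain ⟨a, ha, b, hb, hab⟩ := Finset.one_lt_card.mp h2
  have ha' := Finset.mem_erase.mp ha
  have hb' := Finset.mem_erase.mp hb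
  have hadj := hs.1 ha'.2 hb'.2 hab
  rcases hadj with ⟨h1, _⟩ | ⟨h1, _⟩
  · exact ha'.1 h1
  · exact hb'.1 h1

/-- any graph `X` that is injective with respect to embeddings of
finite `K_n`-free graphs (`n > 2`) contains a complete subgraph on `n` vertices. -/
theorem stmt8 {V : Type} (n : ℕ) (hn : 2 < n) (X : SimpleGraph V)
    (hinj : ∀ (α β : Type) [Fintype α] [Fintype β]
      (S : SimpleGraph α) (T : SimpleGraph β), S.CliqueFree n → T.CliqueFree n →
      ∀ (e : S ↪g T) (f : S →g X), ∃ g : T →g X, g.comp e.toHom = f) :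
    ∃ s : Finset V, X.IsNClique n s := by
  classical
  -- key: every finite family of vertices has a common neighbor
  have key : ∀ (k : ℕ) (x : Fin k → V), ∃ y : V, ∀ i, X.Adj y (x i) := by
    intro k x
    obtain ⟨g, hg⟩ := hinj (Fin k) (Option (Fin k)) ⊥ (starGraph k)
      (cliqueFree_bot (by omega)) (starGraph_cliqueFree k n hn)
      ⟨⟨some, Option.some_injective _⟩, by intro a b; simp [_root_.starGraph]⟩
      ⟨x, fun h => h.elim⟩
    refine ⟨g none, fun i => ?_⟩
    have hgi : g (some i) = x i := by
      have := congrFun (congrArg DFunLike.coe hg) i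
      simpa using this
    have : (_root_.starGraph k).Adj none (some i) := by simp [_root_.starGraph]
    have := g.map_adj this
    rwa [hgi] at this
  -- build a clique of any size greedily
  have build : ∀ k : ℕ, ∃ x : Fin k → V, ∀ i j, i < j → X.Adj (x i) (x j) := by
    intro k
    induction k with
    | zero => exact ⟨Fin.elim0, fun i => i.elim0⟩
    | succ m ih =>
      obtain ⟨x, hx⟩ := ih
      obtain ⟨y, hy⟩ := key m x
      refine ⟨Fin.snoc x y, ?_⟩
      intro i j hij
      rcases Fin.eq_castSucc_or_eq_last i with ⟨i', rfl⟩ | rfl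
      · rcases Fin.eq_castSucc_or_eq_last j with ⟨j', rfl⟩ | rfl
        · simpa [Fin.snoc_castSucc] using hx i' j' (by exact_mod_cast hij)
        · simpa [Fin.snoc_castSucc, Fin.snoc_last] using (hy i').symm
      · exact absurd hij (by simpa using Fin.le_last j)
  obtain ⟨x, hx⟩ := build n
  have hinj' : Function.Injective x := by
    intro i j hij
    by_contra h
    rcases lt_or_gt_of_ne h with hlt | hlt
    · exact (hx i j hlt).ne hij
    · exact (hx j i hlt).ne hij.symm
  refine ⟨Finset.image x Finset.univ, ?_, ?_⟩
  · intro a ha b hb hab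
    obtain ⟨i, _, rfl⟩ := Finset.mem_image.mp ha
    obtain ⟨j, _, rfl⟩ := Finset.mem_image.mp hb
    have hij : i ≠ j := fun h => hab (by rw [h])
    rcases lt_or_gt_of_ne hij with hlt | hlt
    · exact hx i j hlt
    · exact (hx j i hlt).symm
  · rw [Finset.card_image_of_injective _ hinj', Finset.card_univ, Fintype.card_fin]
end

section
/- Let C be a linear order, A = C ∪ {a} and B = C ∪ {b} be one-point linear order extensions with a ≠ b, and let f : A → L, g : B → L be monotone (order-preserving) maps into a linear order L with f↾C = g↾C. Then there exists a linear order W = C ∪ {a,b} extending both A and B, and a monotone map h : W → L with h↾A = f and h↾B = g. -/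
/-- given one-point linear order extensions `A = C ∪ {a}`,
`B = C ∪ {b}` of a linear order `C` and monotone maps `f : A → L`, `g : B → L`
agreeing on `C`, there is a linear order `W = C ∪ {a,b}` extending both `A` and `B`
and a monotone `h : W → L` with `h↾A = f`, `h↾B = g`. -/
theorem stmt9 {C A B L : Type} [LinearOrder C] [LinearOrder A] [LinearOrder B]
    [LinearOrder L]
    (iA : C ↪o A) (iB : C ↪o B) (a : A) (b : B)
    (haA : a ∉ Set.range iA) (hbB : b ∉ Set.range iB)
    (hA : ∀ x : A, x ∈ Set.range iA ∨ x = a)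
    (hB : ∀ y : B, y ∈ Set.range iB ∨ y = b)
    (f : A → L) (g : B → L) (hf : Monotone f) (hg : Monotone g)
    (hfg : ∀ c : C, f (iA c) = g (iB c)) :
    ∃ (W : Type) (le : W → W → Prop), IsLinearOrder W le ∧
      ∃ (jA : A → W) (jB : B → W),
        (∀ x y : A, x ≤ y ↔ le (jA x) (jA y)) ∧
        (∀ x y : B, x ≤ y ↔ le (jB x) (jB y)) ∧
        (∀ c : C, jA (iA c) = jB (iB c)) ∧
        (∀ w : W, w ∈ Set.range jA ∨ w ∈ Set.range jB) ∧
        ∃ h : W → L, (∀ u v : W, le u v → h u ≤ h v) ∧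
          (∀ x : A, h (jA x) = f x) ∧ (∀ y : B, h (jB y) = g y) := by
  classical
  have hane : ∀ c, iA c ≠ a := fun c h => haA ⟨c, h⟩
  have hbne : ∀ c, iB c ≠ b := fun c h => hbB ⟨c, h⟩
  set P : Prop := (∃ c, ¬ iA c < a ∧ iB c < b) ∨
    ((∀ c, iA c < a ↔ iB c < b) ∧ f a < g b) with hPdef
  have lemP : P → ∀ c, iA c < a → iB c < b := by
    rintro (⟨c₀, h₀, h₀'⟩ | ⟨hE, _⟩) c hc
    · have h1 : iA c < iA c₀ := lt_of_lt_of_le hc (not_lt.1 h₀)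
      exact lt_trans (iB.lt_iff_lt.2 (iA.lt_iff_lt.1 h1)) h₀'
    · exact (hE c).1 hc
  have lemNP : ¬ P → ∀ c, iB c < b → iA c < a := by
    intro hnp c hc
    by_contra h
    exact hnp (Or.inl ⟨c, h, hc⟩)
  have lemPle : P → f a ≤ g b := by
    rintro (⟨c₀, h₀, h₀'⟩ | ⟨_, h⟩)
    · calc f a ≤ f (iA c₀) := hf (not_lt.1 h₀)
        _ = g (iB c₀) := hfg c₀
        _ ≤ g b := hg h₀'.le
    · exact h.le
  have lemNPle : ¬ P → g b ≤ f a := by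
    intro hnp
    by_cases hE : ∀ c, iA c < a ↔ iB c < b
    · have : ¬ f a < g b := fun h => hnp (Or.inr ⟨hE, h⟩)
      exact not_lt.1 this
    · obtain ⟨c, hc⟩ := not_forall.1 hE
      rcases lt_or_ge (iA c) a with h1 | h1
      · have h2 : ¬ iB c < b := fun h2 => hc ⟨fun _ => h2, fun _ => h1⟩
        calc g b ≤ g (iB c) := hg (not_lt.1 h2)
          _ = f (iA c) := (hfg c).symm
          _ ≤ f a := hf h1.le
      · have h2 : ¬ iB c < b := fun h2 => hnp (Or.inl ⟨c, not_lt.2 h1, h2⟩)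
        exact absurd ⟨fun h => absurd h (not_lt.2 h1), fun h => absurd h h2⟩ hc
  let le : A ⊕ Unit → A ⊕ Unit → Prop := fun u v =>
    match u, v with
    | Sum.inl x, Sum.inl y => x ≤ y
    | Sum.inl x, Sum.inr _ => (∃ c, iA c = x ∧ iB c < b) ∨ (x = a ∧ P)
    | Sum.inr _, Sum.inl y => (∃ c, iA c = y ∧ ¬ iB c < b) ∨ (y = a ∧ ¬ P)
    | Sum.inr _, Sum.inr _ => True
  have hrefl : ∀ u, le u u := by rintro (x | u) <;> simp [le]
  have htrans : ∀ u v w, le u v → le v w → le u w := by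
    rintro (x | u) (y | v) (z | w) h1 h2
    · exact le_trans h1 h2
    · -- inl x ≤ inl y ≤ inr
      rcases h2 with ⟨c, hc, hcb⟩ | ⟨hy, hP⟩
      · rcases hA x with ⟨c', hc'⟩ | hx
        · subst hc; subst hc'
          exact Or.inl ⟨c', rfl, lt_of_le_of_lt (iB.le_iff_le.2 (iA.le_iff_le.1 h1)) hcb⟩
        · subst hx; subst hc
          exact Or.inr ⟨rfl, Or.inl ⟨c, not_lt.2 h1, hcb⟩⟩
      · subst hy
        rcases hA x with ⟨c', hc'⟩ | hx
        · subst hc'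
          exact Or.inl ⟨c', rfl, lemP hP c' (lt_of_le_of_ne h1 (hane c'))⟩
        · subst hx; exact Or.inr ⟨rfl, hP⟩
    · -- inl x ≤ inr ≤ inl z : goal x ≤ z
      rcases h1 with ⟨c, hc, hcb⟩ | ⟨hx, hP⟩ <;>
        rcases h2 with ⟨c', hc', hcb'⟩ | ⟨hz, hnP⟩
      · subst hc; subst hc'
        exact iA.le_iff_le.2 (iB.le_iff_le.1 (le_trans hcb.le (not_lt.1 hcb')))
      · subst hc; rw [hz]
        exact (lemNP hnP c hcb).le
      · subst hc'; rw [hx]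
        have : ¬ iA c' < a := fun h => hcb' (lemP hP c' h)
        exact not_lt.1 this
      · subst hx; subst hz; exact absurd hP hnP
    · exact h1
    · -- inr ≤ inl y ≤ inl z
      rcases h1 with ⟨c, hc, hcb⟩ | ⟨hy, hnP⟩
      · subst hc
        rcases hA z with ⟨c', hc'⟩ | hz
        · subst hc'
          refine Or.inl ⟨c', rfl, fun h => hcb ?_⟩
          exact lt_of_le_of_lt (iB.le_iff_le.2 (iA.le_iff_le.1 h2)) h
        · subst hz
          refine Or.inr ⟨rfl, fun hP => hcb (lemP hP c (lt_of_le_of_ne h2 (hane c)))⟩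
      · rw [hy] at h2
        rcases hA z with ⟨c', hc'⟩ | hz
        · subst hc'
          refine Or.inl ⟨c', rfl, fun h => ?_⟩
          exact absurd (lt_of_lt_of_le (lemNP hnP c' h) h2) (lt_irrefl _)
        · subst hz; exact Or.inr ⟨rfl, hnP⟩
    · exact trivial
    · exact h2
    · exact trivial
  have hanti : ∀ u v, le u v → le v u → u = v := by
    rintro (x | u) (y | v) h1 h2
    · exact congrArg Sum.inl (le_antisymm h1 h2)
    · exfalso
      rcases h1 with ⟨c, hc, hcb⟩ | ⟨hx, hP⟩ <;>
        rcases h2 with ⟨c', hc', hcb'⟩ | ⟨hx', hnP⟩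
      · rw [← hc'] at hc; rw [iA.injective hc] at hcb; exact hcb' hcb
      · rw [hx'] at hc; exact hane c hc
      · rw [hx] at hc'; exact hane c' hc'
      · exact hnP hP
    · exfalso
      rcases h2 with ⟨c, hc, hcb⟩ | ⟨hx, hP⟩ <;>
        rcases h1 with ⟨c', hc', hcb'⟩ | ⟨hx', hnP⟩
      · rw [← hc'] at hc; rw [iA.injective hc] at hcb; exact hcb' hcb
      · rw [hx'] at hc; exact hane c hc
      · rw [hx] at hc'; exact hane c' hc'
      · exact hnP hP
    · exact congrArg Sum.inr rfl
  have htot : ∀ u v, le u v ∨ le v u := by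
    rintro (x | u) (y | v)
    · exact le_total x y
    · rcases hA x with ⟨c, hc⟩ | hx
      · subst hc
        by_cases h : iB c < b
        · exact Or.inl (Or.inl ⟨c, rfl, h⟩)
        · exact Or.inr (Or.inl ⟨c, rfl, h⟩)
      · subst hx
        by_cases h : P
        · exact Or.inl (Or.inr ⟨rfl, h⟩)
        · exact Or.inr (Or.inr ⟨rfl, h⟩)
    · rcases hA y with ⟨c, hc⟩ | hy
      · subst hc
        by_cases h : iB c < b
        · exact Or.inr (Or.inl ⟨c, rfl, h⟩)
        · exact Or.inl (Or.inl ⟨c, rfl, h⟩)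
      · subst hy
        by_cases h : P
        · exact Or.inr (Or.inr ⟨rfl, h⟩)
        · exact Or.inl (Or.inr ⟨rfl, h⟩)
    · exact Or.inl trivial
  let jB : B → A ⊕ Unit := fun y =>
    if h : y = b then Sum.inr () else Sum.inl (iA (((hB y).resolve_right h).choose))
  have hjBb : jB b = Sum.inr () := dif_pos rfl
  have hjBc : ∀ c, jB (iB c) = Sum.inl (iA c) := by
    intro c
    have hne : iB c ≠ b := hbne c
    have : jB (iB c) = Sum.inl (iA (((hB (iB c)).resolve_right hne).choose)) := dif_neg hne
    rw [this, iB.injective ((hB (iB c)).resolve_right hne).choose_spec]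
  have hlin : IsLinearOrder (A ⊕ Unit) le :=
    { refl := hrefl, trans := htrans, antisymm := hanti, total := htot }
  refine ⟨A ⊕ Unit, le, hlin,
    Sum.inl, jB, fun x y => Iff.rfl, ?_, fun c => (hjBc c).symm, ?_, ?_⟩
  · -- order iff for B
    intro x y
    rcases hB x with ⟨c, hc⟩ | hx <;> rcases hB y with ⟨c', hc'⟩ | hy
    · subst hc; subst hc'
      rw [hjBc, hjBc]
      show iB c ≤ iB c' ↔ iA c ≤ iA c'
      rw [iB.le_iff_le, iA.le_iff_le]
    · subst hc; rw [hy, hjBc, hjBb]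
      show iB c ≤ b ↔ (∃ c', iA c' = iA c ∧ iB c' < b) ∨ (iA c = a ∧ P)
      constructor
      · intro h
        exact Or.inl ⟨c, rfl, lt_of_le_of_ne h (hbne c)⟩
      · rintro (⟨c', hc', hlt⟩ | ⟨h, _⟩)
        · rw [iA.injective hc'] at hlt; exact hlt.le
        · exact absurd h (hane c)
    · subst hc'; rw [hx, hjBc, hjBb]
      show b ≤ iB c' ↔ (∃ c, iA c = iA c' ∧ ¬ iB c < b) ∨ (iA c' = a ∧ ¬ P)
      constructor
      · intro h
        exact Or.inl ⟨c', rfl, not_lt.2 h⟩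
      · rintro (⟨c, hc, hlt⟩ | ⟨h, _⟩)
        · rw [iA.injective hc] at hlt; exact not_lt.1 hlt
        · exact absurd h (hane c')
    · rw [hx, hy, hjBb]
      exact ⟨fun _ => trivial, fun _ => le_refl b⟩
  · -- covering
    rintro (x | u)
    · exact Or.inl ⟨x, rfl⟩
    · exact Or.inr ⟨b, hjBb⟩
  · -- the map h
    refine ⟨Sum.elim f (fun _ => g b), ?_, fun x => rfl, ?_⟩
    · rintro (x | u) (y | v) h
      · exact hf h
      · -- inl x ≤ inr
        rcases h with ⟨c, hc, hcb⟩ | ⟨hx, hP⟩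
        · subst hc
          calc f (iA c) = g (iB c) := hfg c
            _ ≤ g b := hg hcb.le
        · subst hx; exact lemPle hP
      · rcases h with ⟨c, hc, hcb⟩ | ⟨hy, hnP⟩
        · subst hc
          calc g b ≤ g (iB c) := hg (not_lt.1 hcb)
            _ = f (iA c) := (hfg c).symm
        · subst hy; exact lemNPle hnP
      · exact le_refl _
    · intro y
      rcases hB y with ⟨c, hc⟩ | hy
      · subst hc; rw [hjBc]; exact hfg c
      · rw [hy, hjBb]; simp
end

section
/- Every countable linear order is order-isomorphic to an increasing retract of the rationals: for every countable linear order X there exist a monotone embedding j : X → ℚ and a monotone map r : ℚ → X with r ∘ j = id_X. -/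
section aux

variable {X : Type} [LinearOrder X] [Countable X] [Nonempty X]

instance auxCountable : Countable (X ×ₗ ℚ) :=
  inferInstanceAs (Countable (X × ℚ))

instance auxDense : DenselyOrdered (X ×ₗ ℚ) := by
  constructor
  rintro ⟨a, p⟩ ⟨b, q⟩ h
  rcases (Prod.Lex.lt_iff (x := toLex (a,p)) (y := toLex (b,q))).1 h with h | ⟨rfl, h⟩
  · refine ⟨toLex (a, p + 1), ?_, ?_⟩
    · exact (Prod.Lex.lt_iff (x := toLex (a,p)) (y := toLex (a,p+1))).2 (Or.inr ⟨rfl, by norm_num⟩)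
    · exact (Prod.Lex.lt_iff (x := toLex (a,p+1)) (y := toLex (b,q))).2 (Or.inl h)
  · obtain ⟨r, hr1, hr2⟩ := exists_between h
    exact ⟨toLex (a, r), (Prod.Lex.lt_iff (x := toLex (a,p)) (y := toLex (a,r))).2 (Or.inr ⟨rfl, hr1⟩),
      (Prod.Lex.lt_iff (x := toLex (a,r)) (y := toLex (a,q))).2 (Or.inr ⟨rfl, hr2⟩)⟩

instance auxNoMin : NoMinOrder (X ×ₗ ℚ) := by
  constructor
  rintro ⟨a, p⟩
  exact ⟨toLex (a, p - 1), (Prod.Lex.lt_iff (x := toLex (a,p-1)) (y := toLex (a,p))).2 (Or.inr ⟨rfl, by norm_num⟩)⟩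

instance auxNoMax : NoMaxOrder (X ×ₗ ℚ) := by
  constructor
  rintro ⟨a, p⟩
  exact ⟨toLex (a, p + 1), (Prod.Lex.lt_iff (x := toLex (a,p)) (y := toLex (a,p+1))).2 (Or.inr ⟨rfl, by norm_num⟩)⟩

instance auxNonempty : Nonempty (X ×ₗ ℚ) := inferInstanceAs (Nonempty (X × ℚ))

end aux

/-- every countable (nonempty) linear order is order-isomorphic to an
increasing retract of the rationals: there are a monotone embedding `j : X → ℚ` and
a monotone map `r : ℚ → X` with `r ∘ j = id`. -/
theorem stmt12 {X : Type} [LinearOrder X] [Countable X] [Nonempty X] :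
    ∃ (j : X ↪o ℚ) (r : ℚ → X), Monotone r ∧ ∀ x : X, r (j x) = x := by
  obtain ⟨φ⟩ : Nonempty ((X ×ₗ ℚ) ≃o ℚ) := Order.iso_of_countable_dense _ _
  -- embedding x ↦ (x, 0)
  let j₀ : X ↪o (X ×ₗ ℚ) :=
    { toFun := fun x => toLex (x, (0 : ℚ))
      inj' := by
        intro a b h
        simpa using congrArg (fun z => (ofLex z).1) h
      map_rel_iff' := by
        intro a b
        constructor
        · intro h
          rcases Prod.Lex.le_iff.1 h with h | ⟨h, _⟩
          · exact le_of_lt h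
          · exact le_of_eq h
        · intro h
          rcases lt_or_eq_of_le h with h | h
          · exact le_of_lt (Prod.Lex.lt_iff.2 (Or.inl h))
          · exact le_of_eq (by rw [h]) }
  let r₀ : (X ×ₗ ℚ) → X := fun z => (ofLex z).1
  have hr₀ : Monotone r₀ := by
    rintro ⟨a, p⟩ ⟨b, q⟩ h
    rcases Prod.Lex.le_iff.1 h with h | ⟨h, _⟩
    · exact le_of_lt h
    · exact le_of_eq h
  refine ⟨j₀.trans φ.toOrderEmbedding, r₀ ∘ φ.symm, hr₀.comp φ.symm.monotone, ?_⟩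
  intro x
  simp [r₀, j₀]
  rfl
end
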